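/- arXiv:1510.04395 — 4 statements merged into one kernel-verified Lean document; each statement's English description precedes it below -/
import Mathlib

section
/- Set B_τ = 1, C_τ = τ and B̄_τ = 1 − τ = (1/2)P₀(τ) − ξ₁P₁(τ) for τ ∈ [0,1]. Suppose Ā : [0,1]² → ℝ has the form Ā(τ,σ) = α_{(0,0)} + α_{(0,1)}P₁(σ) + α_{(1,0)}P₁(τ) + Σ_{i+j>1} α_{(i,j)} P_i(τ)P_j(σ) (with, say, only finitely many nonzero coefficients α_{(i,j)}), where α_{(0,0)} is an arbitrary real number, α_{(0,1)} − α_{(1,0)} = −√3/6, and α_{(i,j)} = α_{(j,i)} for all i + j > 1. Then the symplectic conditions hold: B̄_τ = B_τ(1 − C_τ) for all τ ∈ [0,1], and B_τ(B̄_σ − Ā(τ,σ)) = B_σ(B̄_τ − Ā(σ,τ)) for all τ, σ ∈ [0,1]; consequently the corresponding csRKN method is symplectic for the second-order system q̈ = −M∇V(q) with M constant symmetric. -/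
/-!
Statement 7: with `B_τ = 1`, `C_τ = τ`, `B̄_τ = 1 − τ`, if `Ā` has the
Legendre expansion `Ā(τ,σ) = Σ_{i,j} α_{(i,j)} P_i(τ)P_j(σ)` (finitely many
nonzero coefficients) with `α_{(0,1)} − α_{(1,0)} = −√3/6` and
`α_{(i,j)} = α_{(j,i)}` for `i + j > 1`, then the symplectic conditions
`B̄_τ = B_τ(1 − C_τ)` and `B_τ(B̄_σ − Ā(τ,σ)) = B_σ(B̄_τ − Ā(σ,τ))` hold
(hence the corresponding csRKN method is symplectic for `q̈ = −M∇V(q)`).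
-/

open Real

/-- The normalized shifted Legendre polynomial on `[0,1]`, via the Rodrigues formula. -/
noncomputable def legP (n : ℕ) : ℝ → ℝ :=
  fun t => (Real.sqrt (2 * n + 1) / n.factorial) * iteratedDeriv n (fun s => (s ^ 2 - s) ^ n) t

lemma legP_zero (t : ℝ) : legP 0 t = 1 := by
  simp [legP]

lemma legP_one (t : ℝ) : legP 1 t = Real.sqrt 3 * (2 * t - 1) := by
  have hfun : (fun s : ℝ => (s ^ 2 - s) ^ 1) = fun s : ℝ => s ^ 2 - s := by
    funext s; ring
  have hd : deriv (fun s : ℝ => (s ^ 2 - s) ^ 1) t = 2 * t - 1 := by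
    rw [hfun]
    have h1 : HasDerivAt (fun s : ℝ => s ^ 2 - s) (2 * t - 1) t := by
      have := (hasDerivAt_pow 2 t).sub (hasDerivAt_id t)
      refine this.congr_deriv ?_
      push_cast
      ring
    exact h1.deriv
  have h3 : ((2 : ℝ) * (1 : ℕ) + 1) = 3 := by norm_num
  unfold legP
  rw [iteratedDeriv_one, hd, h3]
  norm_num

theorem stmt_7 (α : ℕ → ℕ → ℝ) (N : ℕ)
    -- only finitely many nonzero coefficients
    (hfin : ∀ i j : ℕ, N ≤ i ∨ N ≤ j → α i j = 0)
    (hcoef : α 0 1 - α 1 0 = -(Real.sqrt 3) / 6)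
    (hsymm : ∀ i j : ℕ, 1 < i + j → α i j = α j i)
    (Abar : ℝ → ℝ → ℝ)
    (hA : ∀ τ σ : ℝ, Abar τ σ =
      ∑ i ∈ Finset.range N, ∑ j ∈ Finset.range N, α i j * legP i τ * legP j σ)
    (B C Bbar : ℝ → ℝ)
    (hB : ∀ τ, B τ = 1) (hC : ∀ τ, C τ = τ) (hBbar : ∀ τ, Bbar τ = 1 - τ) :
    -- the symplectic conditions hold
    (∀ τ ∈ Set.Icc (0:ℝ) 1, Bbar τ = B τ * (1 - C τ)) ∧
    (∀ τ ∈ Set.Icc (0:ℝ) 1, ∀ σ ∈ Set.Icc (0:ℝ) 1,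
      B τ * (Bbar σ - Abar τ σ) = B σ * (Bbar τ - Abar σ τ)) := by
  have hsqrt3 : Real.sqrt 3 * Real.sqrt 3 = 3 := Real.mul_self_sqrt (by norm_num)
  have hsqrt3pos : 0 < Real.sqrt 3 := Real.sqrt_pos.mpr (by norm_num)
  have hN : 2 ≤ N := by
    by_contra h
    push_neg at h
    have h01 : α 0 1 = 0 := hfin 0 1 (Or.inr (by omega))
    have h10 : α 1 0 = 0 := hfin 1 0 (Or.inl (by omega))
    rw [h01, h10] at hcoef
    nlinarith
  refine ⟨fun τ _ => by rw [hBbar, hB, hC]; ring, fun τ _ σ _ => ?_⟩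
  have key : ∀ x y : ℝ,
      (∑ i ∈ Finset.range N, ∑ j ∈ Finset.range N, α i j * legP i x * legP j y)
      - (∑ i ∈ Finset.range N, ∑ j ∈ Finset.range N, α i j * legP i y * legP j x)
      = x - y := by
    intro x y
    have hswap : (∑ i ∈ Finset.range N, ∑ j ∈ Finset.range N, α i j * legP i y * legP j x)
        = ∑ i ∈ Finset.range N, ∑ j ∈ Finset.range N, α j i * legP i x * legP j y := by
      rw [Finset.sum_comm]
      refine Finset.sum_congr rfl fun i _ => Finset.sum_congr rfl fun j _ => ?_
      ring
    rw [hswap, ← Finset.sum_sub_distrib]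
    have hinner : ∀ i : ℕ,
        (∑ j ∈ Finset.range N, α i j * legP i x * legP j y)
        - (∑ j ∈ Finset.range N, α j i * legP i x * legP j y)
        = ∑ j ∈ Finset.range N, (α i j - α j i) * legP i x * legP j y := by
      intro i
      rw [← Finset.sum_sub_distrib]
      exact Finset.sum_congr rfl fun j _ => by ring
    rw [Finset.sum_congr rfl fun i _ => hinner i]
    rw [← Finset.sum_product']
    have hsub : ({((0:ℕ),(1:ℕ)), ((1:ℕ),(0:ℕ))} : Finset (ℕ × ℕ))
        ⊆ Finset.range N ×ˢ Finset.range N := by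
      intro p hp
      simp only [Finset.mem_insert, Finset.mem_singleton] at hp
      rcases hp with rfl | rfl <;> simp [Finset.mem_product, Finset.mem_range] <;> omega
    have hz : ∀ p ∈ Finset.range N ×ˢ Finset.range N,
        p ∉ ({((0:ℕ),(1:ℕ)), ((1:ℕ),(0:ℕ))} : Finset (ℕ × ℕ)) →
        (α p.1 p.2 - α p.2 p.1) * legP p.1 x * legP p.2 y = 0 := by
      rintro ⟨i, j⟩ _ hp
      simp only [Finset.mem_insert, Finset.mem_singleton, Prod.mk.injEq, not_or] at hp
      have hij : α i j = α j i := by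
        rcases Nat.lt_or_ge (i + j) 2 with h | h
        · have : i = 0 ∧ j = 0 := by omega
          rw [this.1, this.2]
        · exact hsymm i j (by omega)
      rw [hij]
      ring
    rw [← Finset.sum_subset hsub hz]
    rw [Finset.sum_pair (by decide : ((0:ℕ),(1:ℕ)) ≠ ((1:ℕ),(0:ℕ)))]
    simp only [legP_zero, legP_one]
    have h2 : α 1 0 - α 0 1 = Real.sqrt 3 / 6 := by linarith
    rw [hcoef, h2]
    linear_combination ((2 * x - 2 * y) / 6) * hsqrt3
  rw [hB, hB, hBbar, hBbar, hA, hA]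
  have := key τ σ
  linarith
end

section
/- For every real parameter θ, the 2-stage RKN tableau with nodes c₁ = (3−√3)/6, c₂ = (3+√3)/6, weights b₁ = b₂ = 1/2, secondary weights b̄₁ = (3+√3)/12, b̄₂ = (3−√3)/12, and matrix ā₁₁ = ā₂₂ = (1+6θ)/12, ā₁₂ = (1−√3−6θ)/12, ā₂₁ = (1+√3−6θ)/12, satisfies: b̄_i = b_i(1 − c_i) for i = 1,2; B(4): Σ_i b_i c_i^{κ−1} = 1/κ for κ = 1,2,3,4; CN(2): Σ_j ā_{ij} = c_i²/2 for i = 1,2; and DN(2): Σ_i b_i ā_{ij} = b_j c_j²/2 − b_j c_j + b_j/2 for j = 1,2. -/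
/-!
Statement 12: the one-parameter family of 2-stage RKN tableaux (Gaussian
nodes) satisfies `b̄_i = b_i(1−c_i)` and the discrete simplifying assumptions
B(4), CN(2) and DN(2) (hence it is of order 4).
-/

open Real

theorem stmt_12 (θ : ℝ) :
    let c : Fin 2 → ℝ := ![(3 - Real.sqrt 3) / 6, (3 + Real.sqrt 3) / 6]
    let b : Fin 2 → ℝ := ![1 / 2, 1 / 2]
    let bbar : Fin 2 → ℝ := ![(3 + Real.sqrt 3) / 12, (3 - Real.sqrt 3) / 12]
    let A : Matrix (Fin 2) (Fin 2) ℝ :=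
      !![(1 + 6 * θ) / 12, (1 - Real.sqrt 3 - 6 * θ) / 12;
         (1 + Real.sqrt 3 - 6 * θ) / 12, (1 + 6 * θ) / 12]
    -- b̄_i = b_i (1 − c_i)
    (∀ i, bbar i = b i * (1 - c i)) ∧
    -- B(4)
    (∀ κ : ℕ, 1 ≤ κ → κ ≤ 4 → ∑ i, b i * c i ^ (κ - 1) = 1 / (κ : ℝ)) ∧
    -- CN(2)
    (∀ i, ∑ j, A i j = c i ^ 2 / 2) ∧
    -- DN(2)
    (∀ j, ∑ i, b i * A i j = b j * c j ^ 2 / 2 - b j * c j + b j / 2) := by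

  have hs : Real.sqrt 3 ^ 2 = 3 := Real.sq_sqrt (by norm_num)
  intro c b bbar A
  refine ⟨?_, ?_, ?_, ?_⟩
  · intro i; fin_cases i <;> simp [c, b, bbar] <;> ring
  · intro κ h1 h4
    interval_cases κ <;>
      simp [c, b, Fin.sum_univ_two] <;> nlinarith [hs]
  · intro i; fin_cases i <;>
      simp [c, A, Fin.sum_univ_two, Matrix.cons_val_zero, Matrix.cons_val_one] <;> nlinarith [hs]
  · intro j; fin_cases j <;>
      simp [c, b, A, Fin.sum_univ_two, Matrix.cons_val_zero, Matrix.cons_val_one] <;> nlinarith [hs]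
end

section
/- For every real parameter θ, the 3-stage RKN tableau with nodes c₁ = (5−√15)/10, c₂ = 1/2, c₃ = (5+√15)/10, weights b₁ = 5/18, b₂ = 4/9, b₃ = 5/18, secondary weights b̄₁ = (5+√15)/36, b̄₂ = 2/9, b̄₃ = (5−√15)/36, and matrix ā₁₁ = ā₃₃ = (2+30θ)/135, ā₁₂ = (19−6√15−120θ)/270, ā₁₃ = (62−15√15+120θ)/540, ā₂₁ = (19+6√15−120θ)/432, ā₂₂ = (1+15θ)/27, ā₂₃ = (19−6√15−120θ)/432, ā₃₁ = (62+15√15+120θ)/540, ā₃₂ = (19+6√15−120θ)/270, satisfies the discrete symplectic conditions: b̄_i = b_i(1 − c_i) for i = 1, 2, 3, and b_i(b̄_j − ā_{ij}) = b_j(b̄_i − ā_{ji}) for all i, j ∈ {1, 2, 3}. -/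
/-!
Statement 13: the one-parameter family of 3-stage 6th-order RKN tableaux
(Gaussian nodes) satisfies the discrete (Suris) symplectic conditions.
-/

open Real

theorem stmt_13 (θ : ℝ) :
    let c : Fin 3 → ℝ := ![(5 - Real.sqrt 15) / 10, 1 / 2, (5 + Real.sqrt 15) / 10]
    let b : Fin 3 → ℝ := ![5 / 18, 4 / 9, 5 / 18]
    let bbar : Fin 3 → ℝ := ![(5 + Real.sqrt 15) / 36, 2 / 9, (5 - Real.sqrt 15) / 36]
    let A : Matrix (Fin 3) (Fin 3) ℝ :=
      !![(2 + 30 * θ) / 135, (19 - 6 * Real.sqrt 15 - 120 * θ) / 270,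
           (62 - 15 * Real.sqrt 15 + 120 * θ) / 540;
         (19 + 6 * Real.sqrt 15 - 120 * θ) / 432, (1 + 15 * θ) / 27,
           (19 - 6 * Real.sqrt 15 - 120 * θ) / 432;
         (62 + 15 * Real.sqrt 15 + 120 * θ) / 540, (19 + 6 * Real.sqrt 15 - 120 * θ) / 270,
           (2 + 30 * θ) / 135]
    (∀ i, bbar i = b i * (1 - c i)) ∧
    (∀ i j, b i * (bbar j - A i j) = b j * (bbar i - A j i)) := by
  intro c b bbar A
  constructor
  · intro i
    fin_cases i <;> simp [c, b, bbar] <;> ring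
  · intro i j
    fin_cases i <;> fin_cases j <;>
      simp [b, bbar, A, Matrix.cons_val_zero, Matrix.cons_val_one] <;> ring
end

section
/- For every real parameter θ, the 3-stage RKN tableau with nodes c₁ = (5−√15)/10, c₂ = 1/2, c₃ = (5+√15)/10, weights b₁ = 5/18, b₂ = 4/9, b₃ = 5/18, secondary weights b̄₁ = (5+√15)/36, b̄₂ = 2/9, b̄₃ = (5−√15)/36, and matrix ā₁₁ = ā₃₃ = (2+30θ)/135, ā₁₂ = (19−6√15−120θ)/270, ā₁₃ = (62−15√15+120θ)/540, ā₂₁ = (19+6√15−120θ)/432, ā₂₂ = (1+15θ)/27, ā₂₃ = (19−6√15−120θ)/432, ā₃₁ = (62+15√15+120θ)/540, ā₃₂ = (19+6√15−120θ)/270, satisfies: b̄_i = b_i(1 − c_i) for all i; B(6): Σ_i b_i c_i^{κ−1} = 1/κ for κ = 1,…,6; CN(3): Σ_j ā_{ij} c_j^{κ−1} = c_i^{κ+1}/(κ(κ+1)) for all i and κ = 1, 2; and DN(3): Σ_i b_i c_i^{κ−1} ā_{ij} = b_j c_j^{κ+1}/(κ(κ+1)) − b_j c_j/κ + b_j/(κ+1)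 for all j and κ = 1, 2. -/
/-!
Statement 14: the one-parameter family of 3-stage RKN tableaux (Gaussian
nodes) satisfies `b̄_i = b_i(1−c_i)` and the discrete simplifying assumptions
B(6), CN(3) and DN(3) (hence it is of order 6).
-/

open Real

theorem stmt_14 (θ : ℝ) :
    let c : Fin 3 → ℝ := ![(5 - Real.sqrt 15) / 10, 1 / 2, (5 + Real.sqrt 15) / 10]
    let b : Fin 3 → ℝ := ![5 / 18, 4 / 9, 5 / 18]
    let bbar : Fin 3 → ℝ := ![(5 + Real.sqrt 15) / 36, 2 / 9, (5 - Real.sqrt 15) / 36]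
    let A : Matrix (Fin 3) (Fin 3) ℝ :=
      !![(2 + 30 * θ) / 135, (19 - 6 * Real.sqrt 15 - 120 * θ) / 270,
           (62 - 15 * Real.sqrt 15 + 120 * θ) / 540;
         (19 + 6 * Real.sqrt 15 - 120 * θ) / 432, (1 + 15 * θ) / 27,
           (19 - 6 * Real.sqrt 15 - 120 * θ) / 432;
         (62 + 15 * Real.sqrt 15 + 120 * θ) / 540, (19 + 6 * Real.sqrt 15 - 120 * θ) / 270,
           (2 + 30 * θ) / 135]
    -- b̄_i = b_i (1 − c_i)
    (∀ i, bbar i = b i * (1 - c i)) ∧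
    -- B(6)
    (∀ κ : ℕ, 1 ≤ κ → κ ≤ 6 → ∑ i, b i * c i ^ (κ - 1) = 1 / (κ : ℝ)) ∧
    -- CN(3)
    (∀ i, ∀ κ : ℕ, 1 ≤ κ → κ ≤ 2 →
      ∑ j, A i j * c j ^ (κ - 1) = c i ^ (κ + 1) / ((κ : ℝ) * (κ + 1))) ∧
    -- DN(3)
    (∀ j, ∀ κ : ℕ, 1 ≤ κ → κ ≤ 2 →
      ∑ i, b i * c i ^ (κ - 1) * A i j
        = b j * c j ^ (κ + 1) / ((κ : ℝ) * (κ + 1)) - b j * c j / κ + b j / (κ + 1)) := by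
  intro c b bbar A
  have hs : Real.sqrt 15 ^ 2 = 15 := Real.sq_sqrt (by norm_num)
  refine ⟨?_, ?_, ?_, ?_⟩
  · intro i
    fin_cases i <;> simp [c, b, bbar] <;> ring
  · intro κ h1 h6
    interval_cases κ <;> simp [b, c, Fin.sum_univ_three]
    · linear_combination (0 : ℝ) * hs
    · linear_combination (0 : ℝ) * hs
    · linear_combination (1/180 : ℝ) * hs
    · linear_combination (1/120 : ℝ) * hs
    · linear_combination (11/1200 + Real.sqrt 15 ^ 2 / 18000) * hs
    · linear_combination (13/1440 + Real.sqrt 15 ^ 2 / 7200) * hs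
  · intro i κ h1 h2
    fin_cases i <;> interval_cases κ <;> simp [c, A, Fin.sum_univ_three]
    · linear_combination (-1/200 : ℝ) * hs
    · linear_combination (-19/3600 + Real.sqrt 15 / 6000) * hs
    · linear_combination (0 : ℝ) * hs
    · linear_combination (-1/360 : ℝ) * hs
    · linear_combination (-1/200 : ℝ) * hs
    · linear_combination (-19/3600 - Real.sqrt 15 / 6000) * hs
  · intro j κ h1 h2
    fin_cases j <;> interval_cases κ <;> simp [b, c, A, Fin.sum_univ_three]
    · linear_combination (-1/720 : ℝ) * hs
    · linear_combination (1/12960 + Real.sqrt 15 / 21600) * hs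
    · linear_combination (0 : ℝ) * hs
    · linear_combination (1/810 : ℝ) * hs
    · linear_combination (-1/720 : ℝ) * hs
    · linear_combination (1/12960 - Real.sqrt 15 / 21600) * hs
end
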